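/- Let C ⊆ 𝐒 be balanced, and assume that for some N > 0 the element N − x_1² − ⋯ − x_n² of ℝ⟨x⟩ is a conic combination (a finite sum with nonnegative coefficients) of elements of C ∩ ℝ⟨x⟩_2 and hermitian squares pp⋆ with p ∈ ℝ⟨x⟩_1. If L ∈ (M(C)_d)^∨ and L(1) = 0, then L = 0. -/

import Mathlib

open scoped BigOperators Matrix Kronecker

namespace StatePoly

/-! ### Words and symmetrized words -/

/-- Words in the letters `x_1, …, x_n`: the free monoid on `Fin n`. -/
abbrev Word (n : ℕ) := FreeMonoid (Fin n)

/-- The word reversal (the involution `⋆` on words). -/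
def wordRev {n : ℕ} (w : Word n) : Word n := FreeMonoid.reverse w

/-- Two nonempty words are identified iff they are equal or reverses of each other;
this realizes the relation `ς(w) = ς(w⋆)`. -/
def wordSetoid (n : ℕ) : Setoid {l : List (Fin n) // l ≠ []} where
  r u v := u.1 = v.1 ∨ u.1 = v.1.reverse
  iseqv := by
    constructor
    · intro u; exact Or.inl rfl
    · rintro u v (h | h)
      · exact Or.inl h.symm
      · right; rw [h, List.reverse_reverse]
    · rintro u v w (h1 | h1) (h2 | h2)
      · exact Or.inl (h1.trans h2)
      · right; rw [h1, h2]
      · right; rw [h1, h2]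
      · left; rw [h1, h2, List.reverse_reverse]

/-- Symbols `ς(w)`, `w` a nonempty word, modulo `ς(w) = ς(w⋆)`. -/
def SW (n : ℕ) := Quotient (wordSetoid n)

/-- The commutative algebra `𝒮` of state polynomials:
a polynomial ring in the symbols `ς(w)`. -/
abbrev SPoly (n : ℕ) := MvPolynomial (SW n) ℝ

/-- The algebra `𝐒 = 𝒮 ⊗ ℝ⟨x⟩` of nc state polynomials, realized as the monoid algebra
of the free monoid over the polynomial ring `𝒮`. -/
abbrev NCSPoly (n : ℕ) := MonoidAlgebra (SPoly n) (Word n)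

variable {n : ℕ}

/-- The state symbol `ς(w)` of a word, with `ς(1) = 1`. -/
noncomputable def sigWordL (l : List (Fin n)) : SPoly n :=
  if h : l = [] then 1 else MvPolynomial.X (Quotient.mk (wordSetoid n) ⟨l, h⟩)

/-- The unital `𝒮`-linear map `ς : 𝐒 → 𝒮`. -/
noncomputable def sig (f : NCSPoly n) : SPoly n :=
  Finsupp.sum f.coeff fun w c => c * sigWordL (FreeMonoid.toList w)

/-- The involution `⋆` on `𝐒`: it fixes `𝒮 ∪ {x_1, …, x_n}` pointwise and reverses words. -/
noncomputable def ncStar (f : NCSPoly n) : NCSPoly n :=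
  MonoidAlgebra.ofCoeff (Finsupp.mapDomain wordRev f.coeff)

/-- The embedding `𝒮 ⊆ 𝐒`. -/
noncomputable def iotaS (p : SPoly n) : NCSPoly n := MonoidAlgebra.single 1 p

/-- The variable `x_i` as an nc state polynomial. -/
noncomputable def ncX (i : Fin n) : NCSPoly n := MonoidAlgebra.single (FreeMonoid.of i) 1

/-- A real constant as an nc state polynomial. -/
noncomputable def ncConst (r : ℝ) : NCSPoly n := iotaS (MvPolynomial.C r)

/-- `f ∈ 𝐒` lies in the free algebra `ℝ⟨x⟩ ⊆ 𝐒` iff all its coefficients are real constants. -/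
def IsFreePoly (f : NCSPoly n) : Prop := ∀ w : Word n, ∃ r : ℝ, f.coeff w = MvPolynomial.C r

/-! ### Degrees -/

/-- `|w|` on symmetrized words. -/
def swDeg : SW n → ℕ :=
  Quotient.lift (fun l : {l : List (Fin n) // l ≠ []} => l.1.length)
    (by rintro u v (h | h) <;> simp [h])

/-- The degree of a monomial `∏ ς(u_j)^{e_j}`, namely `∑ e_j |u_j|`. -/
def monoWeight (m : SW n →₀ ℕ) : ℕ := m.sum fun q e => e * swDeg q

/-- The degree of a state polynomial. -/
noncomputable def sDeg (p : SPoly n) : ℕ := p.support.sup monoWeight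

/-- The degree of an nc state polynomial: the maximum over the `𝐒`-words appearing in it of
`deg ς(u_1)⋯ς(u_m)v = |v| + ∑_j |u_j|`. -/
noncomputable def ncDeg (f : NCSPoly n) : ℕ :=
  (Finsupp.support f.coeff).sup fun w => sDeg (f.coeff w) + (FreeMonoid.toList w).length

lemma sDeg_zero : sDeg (0 : SPoly n) = 0 := by
  simp [sDeg, MvPolynomial.support_zero]

lemma sDeg_add_le (p q : SPoly n) : sDeg (p + q) ≤ max (sDeg p) (sDeg q) := by
  classical
  refine Finset.sup_le fun m hm => ?_
  rcases Finset.mem_union.mp (MvPolynomial.support_add hm) with h | h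
  · exact le_max_of_le_left (Finset.le_sup h)
  · exact le_max_of_le_right (Finset.le_sup h)

lemma sDeg_smul_le (c : ℝ) (p : SPoly n) : sDeg (c • p) ≤ sDeg p :=
  Finset.sup_le fun _m hm => Finset.le_sup (MvPolynomial.support_smul hm)

lemma sDeg_one : sDeg (1 : SPoly n) = 0 := by
  classical
  refine le_antisymm (Finset.sup_le fun m hm => ?_) (Nat.zero_le _)
  have : m = 0 := by
    by_contra h
    have := MvPolynomial.mem_support_iff.mp hm
    rw [MvPolynomial.coeff_one, if_neg (fun he => h he.symm)] at this
    exact this rfl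
  subst this
  simp [monoWeight]

/-- The subspace `𝒮_{k}` of state polynomials of degree at most `k`. -/
noncomputable def SPolyLe (n k : ℕ) : Submodule ℝ (SPoly n) where
  carrier := {p | sDeg p ≤ k}
  add_mem' := fun {p q} hp hq =>
    le_trans (sDeg_add_le p q) (max_le hp hq)
  zero_mem' := by simp [Set.mem_setOf_eq, sDeg_zero]
  smul_mem' := fun c p hp => le_trans (sDeg_smul_le c p) hp

lemma one_mem_SPolyLe (k : ℕ) : (1 : SPoly n) ∈ SPolyLe n k := by
  show sDeg (1 : SPoly n) ≤ k
  simp [sDeg_one]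

/-- Extension by zero of a linear functional on `𝒮_{k}` to `𝒮`
(used to refer to values of truncated functionals). -/
noncomputable def lext {n k : ℕ} (L : SPolyLe n k →ₗ[ℝ] ℝ) (p : SPoly n) : ℝ :=
  if h : sDeg p ≤ k then L ⟨p, h⟩ else 0

/-! ### Evaluations -/

section Eval

variable {A : Type*} [Ring A] [Module ℝ A]

/-- Evaluation of a word at a tuple `X`. -/
noncomputable def wEvalL (X : Fin n → A) (l : List (Fin n)) : A := (l.map X).prod

/-- The value assigned to the symbol `ς(w)`: `λ(w(X))`. -/
noncomputable def stVal (lam : A → ℝ) (X : Fin n → A) (q : SW n) : ℝ :=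
  lam (wEvalL X (Quotient.out q).1)

/-- Evaluation `a(λ; X) ∈ ℝ` of a state polynomial. -/
noncomputable def sEval (lam : A → ℝ) (X : Fin n → A) (p : SPoly n) : ℝ :=
  MvPolynomial.eval (stVal lam X) p

/-- Evaluation `f(λ; X) ∈ A` of an nc state polynomial. -/
noncomputable def ncEval (lam : A → ℝ) (X : Fin n → A) (f : NCSPoly n) : A :=
  Finsupp.sum f.coeff fun w c => sEval lam X c • wEvalL X (FreeMonoid.toList w)

end Eval

/-! ### States on matrix algebras -/

/-- A density matrix: positive semidefinite with trace 1. -/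
def IsDensity {k : ℕ} (ρ : Matrix (Fin k) (Fin k) ℝ) : Prop :=
  ρ.PosSemidef ∧ ρ.trace = 1

/-- The state on `k×k` matrices induced by a density matrix. -/
noncomputable def matState {k : ℕ} (ρ : Matrix (Fin k) (Fin k) ℝ) :
    Matrix (Fin k) (Fin k) ℝ → ℝ := fun Y => (ρ * Y).trace

/-- The vector state on `k×k` matrices induced by a vector `ψ`. -/
noncomputable def vecStateM {k : ℕ} (ψ : Fin k → ℝ) :
    Matrix (Fin k) (Fin k) ℝ → ℝ := fun Y => ψ ⬝ᵥ Y.mulVec ψ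

/-! ### States on B(H) -/

section Op

variable (H : Type*) [NormedAddCommGroup H] [InnerProductSpace ℝ H] [CompleteSpace H]

/-- A state on `B(H)`: a unital positive `⋆`-linear functional. -/
def IsState (lam : (H →L[ℝ] H) →ₗ[ℝ] ℝ) : Prop :=
  lam 1 = 1 ∧ (∀ Y : H →L[ℝ] H, lam (ContinuousLinearMap.adjoint Y) = lam Y) ∧
    ∀ Y : H →L[ℝ] H, 0 ≤ lam (Y * ContinuousLinearMap.adjoint Y)

/-- A vector state on `B(H)`. -/
def IsVecState (lam : (H →L[ℝ] H) →ₗ[ℝ] ℝ) : Prop :=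
  ∃ v : H, ‖v‖ = 1 ∧ ∀ Y : H →L[ℝ] H, lam Y = inner ℝ (Y v) v

/-- The state semialgebraic set `𝒟_C^∞` determined by the constraint set `C ⊆ 𝐒`. -/
def DCinf (C : Set (NCSPoly n)) :
    Set ((((H →L[ℝ] H) →ₗ[ℝ] ℝ)) × (Fin n → (H →L[ℝ] H))) :=
  {p | IsState H p.1 ∧ (∀ i, ContinuousLinearMap.adjoint (p.2 i) = p.2 i) ∧
    ∀ c ∈ C, (ncEval (⇑p.1) p.2 c).IsPositive}

/-- The subset `vec-𝒟_C^∞` of `𝒟_C^∞` in which the state is a vector state. -/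
def vecDCinf (C : Set (NCSPoly n)) :
    Set ((((H →L[ℝ] H) →ₗ[ℝ] ℝ)) × (Fin n → (H →L[ℝ] H))) :=
  {p ∈ DCinf H C | IsVecState H p.1}

end Op

/-! ### Positivity structures -/

/-- `Ω`: sums of products of elements `ς(h h⋆)`, `h ∈ 𝐒`. -/
def Omega (n : ℕ) : Set (SPoly n) :=
  {x | ∃ (m : ℕ) (g : Fin m → SPoly n),
    (∀ i, ∃ (mi : ℕ) (h : Fin mi → NCSPoly n), g i = ∏ j, sig (h j * ncStar (h j))) ∧
    x = ∑ i, g i}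

/-- Membership in the smallest subset of `𝒮` containing `{1} ∪ S` that is closed under
addition and under multiplication by squares of elements of `A`. -/
inductive QMemIn (A S : Set (SPoly n)) : SPoly n → Prop
  | base {s : SPoly n} : s ∈ insert (1 : SPoly n) S → QMemIn A S s
  | add {p q : SPoly n} : QMemIn A S p → QMemIn A S q → QMemIn A S (p + q)
  | mul_sq {a p : SPoly n} : a ∈ A → QMemIn A S p → QMemIn A S (a ^ 2 * p)

/-- The quadratic module generated by `S` in `𝒮`. -/
def QM (S : Set (SPoly n)) : Set (SPoly n) := {x | QMemIn Set.univ S x}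

/-- The set `C^ς = {ς(p c p⋆) : p ∈ ℝ⟨x⟩, c ∈ {1} ∪ C}`. -/
def Csig (C : Set (NCSPoly n)) : Set (SPoly n) :=
  {x | ∃ p : NCSPoly n, IsFreePoly p ∧ ∃ c ∈ insert (1 : NCSPoly n) C,
    x = sig (p * c * ncStar p)}

/-- A balanced constraint set: closed under `⋆`, and non-symmetric elements come in `±` pairs. -/
def Balanced (C : Set (NCSPoly n)) : Prop :=
  (∀ c ∈ C, ncStar c ∈ C) ∧ ∀ c ∈ C, c ≠ ncStar c → -c ∈ C

/-- An algebraically bounded constraint set: `N - x_1^2 - ⋯ - x_n^2 = ∑ p_i c_i p_i⋆` with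
`c_i ∈ {1} ∪ C ∩ ℝ⟨x⟩` and `p_i ∈ ℝ⟨x⟩`. -/
def AlgBounded (C : Set (NCSPoly n)) : Prop :=
  ∃ N : ℝ, 0 < N ∧ ∃ (m : ℕ) (p c : Fin m → NCSPoly n),
    (∀ i, IsFreePoly (p i)) ∧
    (∀ i, c i = 1 ∨ (c i ∈ C ∧ IsFreePoly (c i))) ∧
    ncConst N - ∑ j : Fin n, ncX j ^ 2 = ∑ i, p i * c i * ncStar (p i)

/-- The truncated quadratic module `M(C)_d`. -/
def MCd (C : Set (NCSPoly n)) (d : ℕ) : Set (SPoly n) :=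
  {x | ∃ (K : ℕ) (f c : Fin K → NCSPoly n),
    (∀ i, c i ∈ insert (1 : NCSPoly n) C) ∧
    (∀ i, ncDeg (f i * c i * ncStar (f i)) ≤ 2 * d) ∧
    x = ∑ i, sig (f i * c i * ncStar (f i))}

end StatePoly

namespace StatePoly

/-- Membership of a truncated linear functional `L : 𝒮_{2d} → ℝ` in the dual cone
`(M(C)_d)^∨`: `L(ς(f c f⋆)) ≥ 0` for all `c ∈ {1} ∪ C` and `f ∈ 𝐒` with
`deg(f c f⋆) ≤ 2d` (values of `L` referred to via the extension-by-zero `lext`). -/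
def InDualCone {n : ℕ} (d : ℕ) (C : Set (NCSPoly n))
    (L : SPolyLe n (2 * d) →ₗ[ℝ] ℝ) : Prop :=
  ∀ f c : NCSPoly n, c ∈ insert (1 : NCSPoly n) C →
    ncDeg (f * c * ncStar f) ≤ 2 * d → 0 ≤ lext L (sig (f * c * ncStar f))

/-- The strengthened boundedness hypothesis: for some `N > 0`, the element
`N − x₁² − ⋯ − xₙ²` is a conic combination of elements of `C ∩ ℝ⟨x⟩_2` and hermitian
squares `pp⋆` with `p ∈ ℝ⟨x⟩_1`. -/
def StrongBounded {n : ℕ} (C : Set (NCSPoly n)) : Prop :=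
  ∃ N : ℝ, 0 < N ∧ ∃ (m : ℕ) (t : Fin m → ℝ) (g : Fin m → NCSPoly n),
    (∀ i, 0 ≤ t i) ∧
    (∀ i, (g i ∈ C ∧ IsFreePoly (g i) ∧ ncDeg (g i) ≤ 2) ∨
      (∃ p : NCSPoly n, IsFreePoly p ∧ ncDeg p ≤ 1 ∧ g i = p * ncStar p)) ∧
    ncConst N - ∑ j : Fin n, ncX j ^ 2 = ∑ i, ncConst (t i) * g i


/-! ### Auxiliary lemmas -/

section Aux

variable {n : ℕ}

open MvPolynomial

lemma monoWeight_add (a b : SW n →₀ ℕ) :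
    monoWeight (a + b) = monoWeight a + monoWeight b :=
  Finsupp.sum_add_index' (by simp) (fun q e e' => add_mul e e' _)

lemma monoWeight_single (q : SW n) (b : ℕ) :
    monoWeight (Finsupp.single q b) = b * swDeg q := by
  classical
  simp [monoWeight, Finsupp.sum_single_index]

lemma le_sDeg {p : SPoly n} {m : SW n →₀ ℕ} (hm : m ∈ p.support) :
    monoWeight m ≤ sDeg p :=
  Finset.le_sup hm

lemma sDeg_mul_le (p q : SPoly n) : sDeg (p * q) ≤ sDeg p + sDeg q := by
  classical
  refine Finset.sup_le fun m hm => ?_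
  obtain ⟨m₁, hm₁, m₂, hm₂, rfl⟩ := Finset.mem_add.mp (MvPolynomial.support_mul p q hm)
  rw [monoWeight_add]
  exact add_le_add (le_sDeg hm₁) (le_sDeg hm₂)

lemma sDeg_X_le (q : SW n) : sDeg (X q : SPoly n) ≤ swDeg q := by
  classical
  rw [sDeg, MvPolynomial.support_X, Finset.sup_singleton, monoWeight_single, one_mul]

lemma sDeg_neg (p : SPoly n) : sDeg (-p) = sDeg p := by
  simp [sDeg, MvPolynomial.support_neg]

lemma sDeg_sum_le {ι : Type*} (s : Finset ι) (p : ι → SPoly n) (B : ℕ)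
    (h : ∀ i ∈ s, sDeg (p i) ≤ B) : sDeg (∑ i ∈ s, p i) ≤ B := by
  classical
  induction s using Finset.cons_induction with
  | empty => simp [sDeg_zero]
  | cons a s ha ih =>
    rw [Finset.sum_cons]
    refine le_trans (sDeg_add_le _ _) (max_le (h a (Finset.mem_cons_self a s)) ?_)
    exact ih fun i hi => h i (Finset.mem_cons_of_mem hi)

lemma sigWordL_nil : sigWordL ([] : List (Fin n)) = 1 := by simp [sigWordL]

lemma sigWordL_reverse (l : List (Fin n)) : sigWordL l.reverse = sigWordL l := by
  rcases eq_or_ne l [] with rfl | h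
  · simp
  · rw [sigWordL, sigWordL, dif_neg h, dif_neg (by simpa using h)]
    congr 1
    exact Quotient.sound (Or.inr rfl)

lemma sDeg_sigWordL_le (l : List (Fin n)) : sDeg (sigWordL l) ≤ l.length := by
  rcases eq_or_ne l [] with rfl | h
  · simp [sigWordL_nil, sDeg_one]
  · rw [sigWordL, dif_neg h]
    exact le_trans (sDeg_X_le _) (le_of_eq rfl)

lemma swDeg_mk (l : List (Fin n)) (h : l ≠ []) :
    swDeg (Quotient.mk (wordSetoid n) ⟨l, h⟩) = l.length := rfl

lemma sigWordL_out (q : SW n) : sigWordL (Quotient.out q).1 = X q := by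
  rw [sigWordL, dif_neg (Quotient.out q).2]
  congr 1
  exact (Quotient.out_eq q)

lemma swDeg_out (q : SW n) : (Quotient.out q).1.length = swDeg q := by
  conv_rhs => rw [← Quotient.out_eq q]
  rfl

lemma sigWordL_append_rev (v v' : List (Fin n)) :
    sigWordL (v ++ v'.reverse) = sigWordL (v' ++ v.reverse) := by
  have : (v' ++ v.reverse).reverse = v ++ v'.reverse := by simp
  rw [← this, sigWordL_reverse]

/-! #### `sig` as a linear map -/

/-- `sig` bundled as an `𝒮`-linear map. -/
noncomputable def sigL : NCSPoly n →ₗ[SPoly n] SPoly n :=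
  Finsupp.linearCombination (SPoly n) (fun w : Word n => sigWordL (FreeMonoid.toList w)) ∘ₗ
    (MonoidAlgebra.coeffLinearEquiv (SPoly n)).toLinearMap

lemma sig_eq_sigL (f : NCSPoly n) : sig f = sigL f := by
  rfl

lemma sig_single (w : Word n) (s : SPoly n) :
    sig (MonoidAlgebra.single w s) = s * sigWordL (FreeMonoid.toList w) := by
  rw [sig, MonoidAlgebra.coeff_single]
  exact Finsupp.sum_single_index (by rw [zero_mul])

lemma sig_add (f g : NCSPoly n) : sig (f + g) = sig f + sig g := by
  simp only [sig_eq_sigL, map_add]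

lemma sig_sub (f g : NCSPoly n) : sig (f - g) = sig f - sig g := by
  simp only [sig_eq_sigL, map_sub]

lemma sig_smul (r : SPoly n) (f : NCSPoly n) : sig (r • f) = r * sig f := by
  rw [sig_eq_sigL, sig_eq_sigL, map_smul, smul_eq_mul]

lemma sig_sum {ι : Type*} (s : Finset ι) (f : ι → NCSPoly n) :
    sig (∑ i ∈ s, f i) = ∑ i ∈ s, sig (f i) := by
  simp only [sig_eq_sigL, map_sum]

/-! #### `ncStar` lemmas -/

lemma ncStar_single (w : Word n) (s : SPoly n) :
    ncStar (MonoidAlgebra.single w s) = MonoidAlgebra.single (wordRev w) s :=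
  MonoidAlgebra.coeff_injective Finsupp.mapDomain_single

lemma ncStar_add (f g : NCSPoly n) : ncStar (f + g) = ncStar f + ncStar g :=
  MonoidAlgebra.coeff_injective Finsupp.mapDomain_add

lemma ncStar_sub (f g : NCSPoly n) : ncStar (f - g) = ncStar f - ncStar g := by
  have h : ncStar (g + (f - g)) = ncStar g + ncStar (f - g) := ncStar_add _ _
  rw [add_sub_cancel] at h
  exact (eq_sub_of_add_eq' h.symm)

lemma ncStar_mul (f g : NCSPoly n) : ncStar (f * g) = ncStar g * ncStar f := by
  classical
  induction f using MonoidAlgebra.induction_linear with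
  | zero => simp [ncStar, Finsupp.mapDomain_zero]
  | add a b ha hb => rw [add_mul, ncStar_add, ncStar_add, ha, hb, mul_add]
  | single a s =>
    induction g using MonoidAlgebra.induction_linear with
    | zero => simp [ncStar, Finsupp.mapDomain_zero]
    | add a' b' ha' hb' => rw [mul_add, ncStar_add, ncStar_add, ha', hb', add_mul]
    | single b t =>
      show ncStar (MonoidAlgebra.single a s * MonoidAlgebra.single b t) = _
      rw [MonoidAlgebra.single_mul_single, ncStar_single, ncStar_single, ncStar_single,
        MonoidAlgebra.single_mul_single, mul_comm t s]
      congr 1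
      exact FreeMonoid.reverse_mul

/-! #### Degree lemmas for `ncDeg` -/

lemma le_ncDeg {f : NCSPoly n} {w : Word n} (h : f.coeff w ≠ 0) :
    sDeg (f.coeff w) + (FreeMonoid.toList w).length ≤ ncDeg f := by
  rw [ncDeg]
  exact Finset.le_sup (f := fun w => sDeg (f.coeff w) + (FreeMonoid.toList w).length)
    (Finsupp.mem_support_iff.mpr h)

lemma ncDeg_single_le (w : Word n) (s : SPoly n) :
    ncDeg (MonoidAlgebra.single w s) ≤ sDeg s + (FreeMonoid.toList w).length := by
  classical
  refine Finset.sup_le fun v hv => ?_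
  have hvw : v = w := Finset.mem_singleton.mp (Finsupp.support_single_subset hv)
  subst hvw
  simp [MonoidAlgebra.coeff_single, Finsupp.single_eq_same]

lemma ncDeg_one : ncDeg (1 : NCSPoly n) = 0 := by
  have := ncDeg_single_le (1 : Word n) (1 : SPoly n)
  simpa [sDeg_one, FreeMonoid.toList_one, ← MonoidAlgebra.one_def] using this

lemma ncStar_apply (f : NCSPoly n) (w : Word n) : (ncStar f).coeff w = f.coeff (wordRev w) := by
  classical
  have hinj : Function.Injective (wordRev (n := n)) := fun a b h => by
    have : FreeMonoid.reverse (FreeMonoid.reverse a) = FreeMonoid.reverse (FreeMonoid.reverse b) := by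
      rw [show FreeMonoid.reverse a = FreeMonoid.reverse b from h]
    simpa using this
  have : wordRev (wordRev w) = w := FreeMonoid.reverse_reverse
  conv_lhs => rw [← this]
  exact Finsupp.mapDomain_apply hinj f.coeff (wordRev w)

lemma ncDeg_ncStar_le (f : NCSPoly n) : ncDeg (ncStar f) ≤ ncDeg f := by
  classical
  refine Finset.sup_le fun w hw => ?_
  have hne : (ncStar f).coeff w ≠ 0 := Finsupp.mem_support_iff.mp hw
  rw [ncStar_apply] at hne ⊢
  have h := le_ncDeg hne
  have hlen : (FreeMonoid.toList (wordRev w)).length = (FreeMonoid.toList w).length :=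
    List.length_reverse
  omega

lemma ncDeg_mul_le (f g : NCSPoly n) : ncDeg (f * g) ≤ ncDeg f + ncDeg g := by
  classical
  refine Finset.sup_le fun w hw => ?_
  obtain ⟨a₁, ha₁, a₂, ha₂, rfl⟩ := Finset.mem_mul.mp (MonoidAlgebra.support_coeff_mul_subset f g hw)
  have h1 : sDeg (f.coeff a₁) + (FreeMonoid.toList a₁).length ≤ ncDeg f :=
    le_ncDeg (Finsupp.mem_support_iff.mp ha₁)
  have h2 : sDeg (g.coeff a₂) + (FreeMonoid.toList a₂).length ≤ ncDeg g :=
    le_ncDeg (Finsupp.mem_support_iff.mp ha₂)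
  have hlen : (FreeMonoid.toList (a₁ * a₂)).length
      = (FreeMonoid.toList a₁).length + (FreeMonoid.toList a₂).length := by
    rw [FreeMonoid.toList_mul, List.length_append]
  have hdeg : sDeg ((f * g).coeff (a₁ * a₂))
      ≤ (ncDeg f + ncDeg g) - (FreeMonoid.toList (a₁ * a₂)).length := by
    rw [MonoidAlgebra.coeff_mul]
    refine sDeg_sum_le _ _ _ fun b₁ hb₁ => ?_
    refine sDeg_sum_le _ _ _ fun b₂ hb₂ => ?_
    dsimp only
    split_ifs with hab
    · have hb1 : sDeg (f.coeff b₁) + (FreeMonoid.toList b₁).length ≤ ncDeg f :=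
        le_ncDeg (Finsupp.mem_support_iff.mp hb₁)
      have hb2 : sDeg (g.coeff b₂) + (FreeMonoid.toList b₂).length ≤ ncDeg g :=
        le_ncDeg (Finsupp.mem_support_iff.mp hb₂)
      have hlen' : (FreeMonoid.toList (a₁ * a₂)).length
          = (FreeMonoid.toList b₁).length + (FreeMonoid.toList b₂).length := by
        rw [← hab, FreeMonoid.toList_mul, List.length_append]
      have := sDeg_mul_le (f.coeff b₁) (g.coeff b₂)
      omega
    · simp [sDeg_zero]
  omega

lemma ncDeg_add_le (f g : NCSPoly n) : ncDeg (f + g) ≤ max (ncDeg f) (ncDeg g) := by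
  classical
  refine Finset.sup_le fun w hw => ?_
  have hw' : f.coeff w + g.coeff w ≠ 0 := by
    simpa [MonoidAlgebra.coeff_add, Finsupp.add_apply] using Finsupp.mem_support_iff.mp hw
  have hadd : ((f + g).coeff w) = f.coeff w + g.coeff w := rfl
  rw [hadd]
  rcases eq_or_ne (f.coeff w) 0 with hf | hf
  · have hg : g.coeff w ≠ 0 := by intro h; exact hw' (by rw [hf, h, add_zero])
    have := le_ncDeg hg
    rw [hf, zero_add]
    omega
  · rcases eq_or_ne (g.coeff w) 0 with hg | hg
    · have := le_ncDeg hf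
      rw [hg, add_zero]
      omega
    · have h1 := le_ncDeg hf
      have h2 := le_ncDeg hg
      have := sDeg_add_le (f.coeff w) (g.coeff w)
      have hmax := max_le_iff.mp (le_refl (max (sDeg (f.coeff w)) (sDeg (g.coeff w))))
      rcases max_cases (sDeg (f.coeff w)) (sDeg (g.coeff w)) with ⟨he, _⟩ | ⟨he, _⟩ <;> omega

lemma sDeg_sig_le (f : NCSPoly n) : sDeg (sig f) ≤ ncDeg f := by
  classical
  rw [sig]
  refine sDeg_sum_le _ _ _ fun w hw => ?_
  dsimp only
  have h1 := le_ncDeg (Finsupp.mem_support_iff.mp hw)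
  have h2 := sDeg_mul_le (f.coeff w) (sigWordL (FreeMonoid.toList w))
  have h3 := sDeg_sigWordL_le (FreeMonoid.toList w)
  omega

end Aux

section Aux2

variable {n : ℕ}

open MvPolynomial

/-! #### `lext` lemmas -/

variable {k : ℕ} (L : SPolyLe n k →ₗ[ℝ] ℝ)

lemma lext_apply {p : SPoly n} (hp : sDeg p ≤ k) : lext L p = L ⟨p, hp⟩ :=
  dif_pos hp

lemma lext_add {p q : SPoly n} (hp : sDeg p ≤ k) (hq : sDeg q ≤ k) :
    lext L (p + q) = lext L p + lext L q := by
  rw [lext_apply L (le_trans (sDeg_add_le p q) (max_le hp hq)), lext_apply L hp,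
    lext_apply L hq, ← map_add]
  congr 1

lemma lext_sub {p q : SPoly n} (hp : sDeg p ≤ k) (hq : sDeg q ≤ k) :
    lext L (p - q) = lext L p - lext L q := by
  have hpq : sDeg (p - q) ≤ k := by
    rw [sub_eq_add_neg]
    exact le_trans (sDeg_add_le p (-q)) (max_le hp (by rwa [sDeg_neg]))
  rw [lext_apply L hpq, lext_apply L hp, lext_apply L hq, ← map_sub]
  congr 1

lemma lext_smul (r : ℝ) {p : SPoly n} (hp : sDeg p ≤ k) :
    lext L (r • p) = r * lext L p := by
  rw [lext_apply L (le_trans (sDeg_smul_le r p) hp), lext_apply L hp, ← smul_eq_mul,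
    ← map_smul]
  congr 1

lemma lext_C_mul (r : ℝ) {p : SPoly n} (hp : sDeg p ≤ k) :
    lext L (C r * p) = r * lext L p := by
  rw [← MvPolynomial.smul_eq_C_mul, lext_smul L r hp]

lemma lext_sum {ι : Type*} (s : Finset ι) (p : ι → SPoly n)
    (h : ∀ i ∈ s, sDeg (p i) ≤ k) :
    lext L (∑ i ∈ s, p i) = ∑ i ∈ s, lext L (p i) := by
  classical
  induction s using Finset.cons_induction with
  | empty =>
    rw [Finset.sum_empty, Finset.sum_empty,
      lext_apply L (show sDeg (0 : SPoly n) ≤ k by rw [sDeg_zero]; exact Nat.zero_le k)]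
    exact (congrArg L (Subtype.ext rfl)).trans (map_zero L)
  | cons a s ha ih =>
    rw [Finset.sum_cons, Finset.sum_cons,
      lext_add L (h a (Finset.mem_cons_self a s))
        (sDeg_sum_le _ _ _ fun i hi => h i (Finset.mem_cons_of_mem hi)),
      ih fun i hi => h i (Finset.mem_cons_of_mem hi)]

/-! #### Multiset encodings of monomials -/

/-- The total weight of a multiset of symmetrized words. -/
def wsum (S : Multiset (SW n)) : ℕ := (S.map swDeg).sum

/-- The monomial associated to a multiset of symmetrized words. -/
noncomputable def msPoly (S : Multiset (SW n)) : SPoly n :=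
  (S.map fun q => (X q : SPoly n)).prod

lemma wsum_zero : wsum (0 : Multiset (SW n)) = 0 := rfl

lemma wsum_cons (q : SW n) (S : Multiset (SW n)) :
    wsum (q ::ₘ S) = swDeg q + wsum S := by
  simp [wsum]

lemma wsum_add (S T : Multiset (SW n)) : wsum (S + T) = wsum S + wsum T := by
  simp [wsum]

lemma msPoly_zero : msPoly (0 : Multiset (SW n)) = 1 := rfl

lemma msPoly_cons (q : SW n) (S : Multiset (SW n)) :
    msPoly (q ::ₘ S) = X q * msPoly S := by
  simp [msPoly]

lemma msPoly_add (S T : Multiset (SW n)) : msPoly (S + T) = msPoly S * msPoly T := by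
  simp [msPoly]

lemma sDeg_msPoly_le (S : Multiset (SW n)) : sDeg (msPoly S) ≤ wsum S := by
  induction S using Multiset.induction with
  | empty => simp [msPoly_zero, sDeg_one, wsum_zero]
  | cons q S ih =>
    rw [msPoly_cons, wsum_cons]
    exact le_trans (sDeg_mul_le _ _) (add_le_add (sDeg_X_le q) ih)

lemma monomial_eq_msPoly (m : SW n →₀ ℕ) :
    (monomial m (1 : ℝ) : SPoly n) = msPoly m.toMultiset ∧ monoWeight m = wsum m.toMultiset := by
  classical
  induction m using Finsupp.induction with
  | zero => simp [Finsupp.toMultiset_zero, msPoly_zero, wsum_zero, monoWeight]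
  | single_add a b f ha hb ih =>
    have hmon : (monomial (Finsupp.single a b + f) (1 : ℝ) : SPoly n)
        = X a ^ b * monomial f 1 := by
      rw [X_pow_eq_monomial, monomial_mul, one_mul]
    have hms : msPoly (Finsupp.single a b + f).toMultiset
        = X a ^ b * msPoly f.toMultiset := by
      rw [Finsupp.toMultiset_add, msPoly_add, Finsupp.toMultiset_single]
      congr 1
      rw [msPoly]
      rw [Multiset.nsmul_singleton, Multiset.map_replicate, Multiset.prod_replicate]
    have hw : wsum (Finsupp.single a b + f).toMultiset
        = b * swDeg a + wsum f.toMultiset := by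
      rw [Finsupp.toMultiset_add, wsum_add, Finsupp.toMultiset_single]
      congr 1
      rw [wsum, Multiset.nsmul_singleton, Multiset.map_replicate, Multiset.sum_replicate,
        smul_eq_mul]
    refine ⟨?_, ?_⟩
    · rw [hmon, hms, ih.1]
    · rw [monoWeight_add, monoWeight_single, hw, ih.2]

/-- Greedy splitting of a multiset. -/
lemma split_aux (d : ℕ) (S : Multiset (SW n)) :
    ∃ S1 S2 : Multiset (SW n), S = S1 + S2 ∧ wsum S1 ≤ d ∧
      (S2 = 0 ∨ ∃ q S2', S2 = q ::ₘ S2' ∧ d < wsum S1 + swDeg q) := by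
  induction S using Multiset.induction with
  | empty => exact ⟨0, 0, by simp, by simp [wsum_zero], Or.inl rfl⟩
  | cons a T ih =>
    obtain ⟨T1, T2, hT, h1, h2⟩ := ih
    rcases h2 with h2 | ⟨q, T2', hT2, hq⟩
    · subst h2
      by_cases hle : wsum T1 + swDeg a ≤ d
      · exact ⟨a ::ₘ T1, 0, by rw [hT]; simp [Multiset.cons_add], by
          rw [wsum_cons]; omega, Or.inl rfl⟩
      · exact ⟨T1, {a}, by
          rw [hT, add_zero, ← Multiset.singleton_add, add_comm], h1,
          Or.inr ⟨a, 0, rfl, by omega⟩⟩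
    · refine ⟨T1, a ::ₘ T2, by
        rw [hT, add_comm T1 T2, ← Multiset.cons_add, add_comm], h1,
        Or.inr ⟨q, a ::ₘ T2', ?_, hq⟩⟩
      rw [hT2, Multiset.cons_swap]

/-- Splitting of a multiset of total weight at most `2 d` into two halves of weight
at most `d`, with at most one element cut in two. -/
lemma split (d : ℕ) (S : Multiset (SW n)) (hS : wsum S ≤ 2 * d) :
    ∃ S1 S2 : Multiset (SW n),
      (S = S1 + S2 ∧ wsum S1 ≤ d ∧ wsum S2 ≤ d) ∨
      (∃ q c, S = q ::ₘ (S1 + S2) ∧ c ≤ swDeg q ∧ wsum S1 + c ≤ d ∧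
        wsum S2 + (swDeg q - c) ≤ d) := by
  obtain ⟨S1, S2, hsplit, h1, h2⟩ := split_aux d S
  rcases h2 with rfl | ⟨q, S2', hS2, hq⟩
  · exact ⟨S1, 0, Or.inl ⟨by simpa using hsplit, h1, by simp [wsum_zero]⟩⟩
  · refine ⟨S1, S2', Or.inr ⟨q, d - wsum S1, ?_, ?_, ?_, ?_⟩⟩
    · rw [hsplit, hS2, add_comm, Multiset.cons_add, add_comm S2' S1]
    · omega
    · omega
    · have := congrArg wsum hsplit
      rw [wsum_add, hS2, wsum_cons] at this
      omega

end Aux2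

section Aux3

open MvPolynomial

variable {n : ℕ}

/-- Single-word nc state polynomial. -/
noncomputable def sgl (v : List (Fin n)) (s : SPoly n) : NCSPoly n :=
  MonoidAlgebra.single (FreeMonoid.ofList v) s

lemma sgl_mul (a b : List (Fin n)) (s t : SPoly n) :
    sgl a s * sgl b t = sgl (a ++ b) (s * t) := by
  rw [sgl, sgl, sgl, MonoidAlgebra.single_mul_single, FreeMonoid.ofList_append]

lemma ncStar_sgl (v : List (Fin n)) (s : SPoly n) :
    ncStar (sgl v s) = sgl v.reverse s := by
  rw [sgl, ncStar_single]; rfl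

lemma sig_sgl (v : List (Fin n)) (s : SPoly n) :
    sig (sgl v s) = s * sigWordL v := by
  rw [sgl, sig_single, FreeMonoid.toList_ofList]

lemma ncDeg_sgl_le (v : List (Fin n)) (s : SPoly n) :
    ncDeg (sgl v s) ≤ sDeg s + v.length := by
  have := ncDeg_single_le (FreeMonoid.ofList v) s
  rw [FreeMonoid.toList_ofList] at this
  exact this

lemma ncConst_eq_sgl (r : ℝ) : (ncConst r : NCSPoly n) = sgl [] (C r) := rfl

lemma ncX_eq_sgl (j : Fin n) : (ncX j : NCSPoly n) = sgl [j] 1 := rfl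

lemma sDeg_ssl_le (s t : SPoly n) (l : List (Fin n)) :
    sDeg (s * t * sigWordL l) ≤ sDeg s + sDeg t + l.length :=
  le_trans (sDeg_mul_le _ _) (add_le_add (sDeg_mul_le s t) (sDeg_sigWordL_le l))

lemma ncConst_mul (r : ℝ) (h : NCSPoly n) : ncConst r * h = (C r : SPoly n) • h := by
  refine MonoidAlgebra.coeff_injective (Finsupp.ext fun w => ?_)
  rw [ncConst, iotaS, MonoidAlgebra.coeff_single_one_mul, MonoidAlgebra.coeff_smul_apply, smul_eq_mul]

lemma ncDeg_neg (f : NCSPoly n) : ncDeg (-f) = ncDeg f := by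
  unfold ncDeg
  rw [MonoidAlgebra.coeff_neg, Finsupp.support_neg]
  refine Finset.sup_congr rfl fun w _ => ?_
  have : (-f.coeff) w = -(f.coeff w) := rfl
  rw [this, sDeg_neg]

lemma ncDeg_sub_le (f g : NCSPoly n) : ncDeg (f - g) ≤ max (ncDeg f) (ncDeg g) := by
  rw [sub_eq_add_neg]
  refine le_trans (ncDeg_add_le f (-g)) ?_
  rw [ncDeg_neg]

variable {d : ℕ} {Cs : Set (NCSPoly n)} (L : SPolyLe n (2 * d) →ₗ[ℝ] ℝ)
  (hdual : InDualCone d Cs L)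
include hdual

lemma lext_sq_nonneg (s : SPoly n) (v : List (Fin n)) (h : sDeg s + v.length ≤ d) :
    0 ≤ lext L (s * s * sigWordL (v ++ v.reverse)) := by
  have hF : sig (sgl v s * ncStar (sgl v s)) = s * s * sigWordL (v ++ v.reverse) := by
    rw [ncStar_sgl, sgl_mul, sig_sgl]
  have hdeg : ncDeg (sgl v s * (1 : NCSPoly n) * ncStar (sgl v s)) ≤ 2 * d := by
    rw [mul_one]
    refine le_trans (ncDeg_mul_le _ _) ?_
    have h1 := ncDeg_sgl_le v s
    have h2 := le_trans (ncDeg_ncStar_le (sgl v s)) (ncDeg_sgl_le v s)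
    omega
  have h0 := hdual (sgl v s) 1 (Set.mem_insert _ _) hdeg
  rwa [mul_one, hF] at h0

lemma lext_cross_eq_zero (s1 s2 : SPoly n) (v v' : List (Fin n))
    (h1 : sDeg s1 + v.length ≤ d) (h2 : sDeg s2 + v'.length ≤ d)
    (hQ1 : lext L (s1 * s1 * sigWordL (v ++ v.reverse)) = 0)
    (hQ2 : lext L (s2 * s2 * sigWordL (v' ++ v'.reverse)) = 0) :
    lext L (s1 * s2 * sigWordL (v ++ v'.reverse)) = 0 := by
  have eff : sig (sgl v s1 * ncStar (sgl v s1)) = s1 * s1 * sigWordL (v ++ v.reverse) := by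
    rw [ncStar_sgl, sgl_mul, sig_sgl]
  have egg : sig (sgl v' s2 * ncStar (sgl v' s2)) = s2 * s2 * sigWordL (v' ++ v'.reverse) := by
    rw [ncStar_sgl, sgl_mul, sig_sgl]
  have efg : sig (sgl v s1 * ncStar (sgl v' s2)) = s1 * s2 * sigWordL (v ++ v'.reverse) := by
    rw [ncStar_sgl, sgl_mul, sig_sgl]
  have egf : sig (sgl v' s2 * ncStar (sgl v s1)) = s1 * s2 * sigWordL (v ++ v'.reverse) := by
    rw [ncStar_sgl, sgl_mul, sig_sgl, sigWordL_append_rev, mul_comm s2 s1]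
  have hdf : ncDeg (sgl v s1) ≤ d := le_trans (ncDeg_sgl_le v s1) h1
  have hdg : ncDeg (sgl v' s2) ≤ d := le_trans (ncDeg_sgl_le v' s2) h2
  have hdQ1 : sDeg (s1 * s1 * sigWordL (v ++ v.reverse)) ≤ 2 * d := by
    have := sDeg_ssl_le s1 s1 (v ++ v.reverse)
    have hl : (v ++ v.reverse).length = v.length + v.length := by
      rw [List.length_append, List.length_reverse]
    omega
  have hdQ2 : sDeg (s2 * s2 * sigWordL (v' ++ v'.reverse)) ≤ 2 * d := by
    have := sDeg_ssl_le s2 s2 (v' ++ v'.reverse)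
    have hl : (v' ++ v'.reverse).length = v'.length + v'.length := by
      rw [List.length_append, List.length_reverse]
    omega
  have hdM : sDeg (s1 * s2 * sigWordL (v ++ v'.reverse)) ≤ 2 * d := by
    have := sDeg_ssl_le s1 s2 (v ++ v'.reverse)
    have hl : (v ++ v'.reverse).length = v.length + v'.length := by
      rw [List.length_append, List.length_reverse]
    omega
  have hplus : 0 ≤ lext L (s1 * s1 * sigWordL (v ++ v.reverse))
      + lext L (s1 * s2 * sigWordL (v ++ v'.reverse))
      + (lext L (s1 * s2 * sigWordL (v ++ v'.reverse))
        + lext L (s2 * s2 * sigWordL (v' ++ v'.reverse))) := by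
    have hsig : sig ((sgl v s1 + sgl v' s2) * ncStar (sgl v s1 + sgl v' s2))
        = (s1 * s1 * sigWordL (v ++ v.reverse) + s1 * s2 * sigWordL (v ++ v'.reverse))
          + (s1 * s2 * sigWordL (v ++ v'.reverse) + s2 * s2 * sigWordL (v' ++ v'.reverse)) := by
      rw [ncStar_add, add_mul, mul_add, mul_add, sig_add, sig_add, sig_add,
        eff, efg, egf, egg]
    have hdeg : ncDeg ((sgl v s1 + sgl v' s2) * (1 : NCSPoly n)
        * ncStar (sgl v s1 + sgl v' s2)) ≤ 2 * d := by
      rw [mul_one]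
      refine le_trans (ncDeg_mul_le _ _) ?_
      have ha := le_trans (ncDeg_add_le (sgl v s1) (sgl v' s2)) (max_le hdf hdg)
      have hb := le_trans (ncDeg_ncStar_le (sgl v s1 + sgl v' s2)) ha
      omega
    have h0 := hdual (sgl v s1 + sgl v' s2) 1 (Set.mem_insert _ _) hdeg
    rw [mul_one, hsig] at h0
    rwa [lext_add L (le_trans (sDeg_add_le _ _) (max_le hdQ1 hdM))
        (le_trans (sDeg_add_le _ _) (max_le hdM hdQ2)),
      lext_add L hdQ1 hdM, lext_add L hdM hdQ2] at h0
  have hminus : 0 ≤ lext L (s1 * s1 * sigWordL (v ++ v.reverse))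
      - lext L (s1 * s2 * sigWordL (v ++ v'.reverse))
      - (lext L (s1 * s2 * sigWordL (v ++ v'.reverse))
        - lext L (s2 * s2 * sigWordL (v' ++ v'.reverse))) := by
    have hsig : sig ((sgl v s1 - sgl v' s2) * ncStar (sgl v s1 - sgl v' s2))
        = (s1 * s1 * sigWordL (v ++ v.reverse) - s1 * s2 * sigWordL (v ++ v'.reverse))
          - (s1 * s2 * sigWordL (v ++ v'.reverse) - s2 * s2 * sigWordL (v' ++ v'.reverse)) := by
      rw [ncStar_sub, sub_mul, mul_sub, mul_sub, sig_sub, sig_sub, sig_sub,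
        eff, efg, egf, egg]
    have hdeg : ncDeg ((sgl v s1 - sgl v' s2) * (1 : NCSPoly n)
        * ncStar (sgl v s1 - sgl v' s2)) ≤ 2 * d := by
      rw [mul_one]
      refine le_trans (ncDeg_mul_le _ _) ?_
      have ha := le_trans (ncDeg_sub_le (sgl v s1) (sgl v' s2)) (max_le hdf hdg)
      have hb := le_trans (ncDeg_ncStar_le (sgl v s1 - sgl v' s2)) ha
      omega
    have h0 := hdual (sgl v s1 - sgl v' s2) 1 (Set.mem_insert _ _) hdeg
    rw [mul_one, hsig] at h0
    have hsub1 : sDeg (s1 * s1 * sigWordL (v ++ v.reverse)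
        - s1 * s2 * sigWordL (v ++ v'.reverse)) ≤ 2 * d := by
      rw [sub_eq_add_neg]
      refine le_trans (sDeg_add_le _ _) (max_le hdQ1 ?_)
      rwa [sDeg_neg]
    have hsub2 : sDeg (s1 * s2 * sigWordL (v ++ v'.reverse)
        - s2 * s2 * sigWordL (v' ++ v'.reverse)) ≤ 2 * d := by
      rw [sub_eq_add_neg]
      refine le_trans (sDeg_add_le _ _) (max_le hdM ?_)
      rwa [sDeg_neg]
    rwa [lext_sub L hsub1 hsub2, lext_sub L hdQ1 hdM, lext_sub L hdM hdQ2] at h0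
  rw [hQ1, hQ2] at hplus hminus
  linarith

lemma lext_sq_empty (q : SW n) (s' : SPoly n) (hk : sDeg s' + swDeg q ≤ d)
    (hA : lext L (s' * s' * sigWordL ((Quotient.out q).1 ++ (Quotient.out q).1.reverse)) = 0) :
    lext L ((X q * s') * (X q * s')) = 0 := by
  set u : List (Fin n) := (Quotient.out q).1 with hu
  have hul : u.length = swDeg q := swDeg_out q
  have hsX : sDeg (X q * s' : SPoly n) ≤ swDeg q + sDeg s' :=
    le_trans (sDeg_mul_le _ _) (add_le_add (sDeg_X_le q) le_rfl)
  have eff : sig (sgl u s' * ncStar (sgl u s')) = s' * s' * sigWordL (u ++ u.reverse) := by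
    rw [ncStar_sgl, sgl_mul, sig_sgl]
  have efg : sig (sgl u s' * ncStar (sgl [] (X q * s')))
      = (X q * s') * (X q * s') := by
    rw [ncStar_sgl, sgl_mul, sig_sgl]
    rw [show u ++ (List.reverse ([] : List (Fin n))) = u by simp, hu, sigWordL_out]
    ring
  have egf : sig (sgl [] (X q * s') * ncStar (sgl u s'))
      = (X q * s') * (X q * s') := by
    rw [ncStar_sgl, sgl_mul, sig_sgl]
    rw [show ([] : List (Fin n)) ++ u.reverse = u.reverse by simp, sigWordL_reverse, hu,
      sigWordL_out]
    ring
  have egg : sig (sgl [] (X q * s') * ncStar (sgl [] (X q * s')))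
      = (X q * s') * (X q * s') := by
    rw [ncStar_sgl, sgl_mul, sig_sgl]
    simp [sigWordL_nil]
  have hdf : ncDeg (sgl u s') ≤ d := by
    have := ncDeg_sgl_le u s'
    omega
  have hdg : ncDeg (sgl [] (X q * s')) ≤ d := by
    have := ncDeg_sgl_le ([] : List (Fin n)) (X q * s')
    simp only [List.length_nil, add_zero] at this
    omega
  have hdA : sDeg (s' * s' * sigWordL (u ++ u.reverse)) ≤ 2 * d := by
    have := sDeg_ssl_le s' s' (u ++ u.reverse)
    have hl : (u ++ u.reverse).length = u.length + u.length := by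
      rw [List.length_append, List.length_reverse]
    omega
  have hdT : sDeg ((X q * s') * (X q * s') : SPoly n) ≤ 2 * d := by
    have := sDeg_mul_le (X q * s') (X q * s')
    omega
  have hplus : 0 ≤ lext L (s' * s' * sigWordL (u ++ u.reverse))
      + lext L ((X q * s') * (X q * s'))
      + (lext L ((X q * s') * (X q * s')) + lext L ((X q * s') * (X q * s'))) := by
    have hsig : sig ((sgl u s' + sgl [] (X q * s'))
        * ncStar (sgl u s' + sgl [] (X q * s')))
        = (s' * s' * sigWordL (u ++ u.reverse) + (X q * s') * (X q * s'))
          + ((X q * s') * (X q * s') + (X q * s') * (X q * s')) := by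
      rw [ncStar_add, add_mul, mul_add, mul_add, sig_add, sig_add, sig_add,
        eff, efg, egf, egg]
    have hdeg : ncDeg ((sgl u s' + sgl [] (X q * s')) * (1 : NCSPoly n)
        * ncStar (sgl u s' + sgl [] (X q * s'))) ≤ 2 * d := by
      rw [mul_one]
      refine le_trans (ncDeg_mul_le _ _) ?_
      have ha := le_trans (ncDeg_add_le (sgl u s') (sgl [] (X q * s'))) (max_le hdf hdg)
      have hb := le_trans (ncDeg_ncStar_le (sgl u s' + sgl [] (X q * s'))) ha
      omega
    have h0 := hdual (sgl u s' + sgl [] (X q * s')) 1 (Set.mem_insert _ _) hdeg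
    rw [mul_one, hsig] at h0
    rwa [lext_add L (le_trans (sDeg_add_le _ _) (max_le hdA hdT))
        (le_trans (sDeg_add_le _ _) (max_le hdT hdT)),
      lext_add L hdA hdT, lext_add L hdT hdT] at h0
  have hminus : 0 ≤ lext L (s' * s' * sigWordL (u ++ u.reverse))
      - lext L ((X q * s') * (X q * s'))
      - (lext L ((X q * s') * (X q * s')) - lext L ((X q * s') * (X q * s'))) := by
    have hsig : sig ((sgl u s' - sgl [] (X q * s'))
        * ncStar (sgl u s' - sgl [] (X q * s')))
        = (s' * s' * sigWordL (u ++ u.reverse) - (X q * s') * (X q * s'))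
          - ((X q * s') * (X q * s') - (X q * s') * (X q * s')) := by
      rw [ncStar_sub, sub_mul, mul_sub, mul_sub, sig_sub, sig_sub, sig_sub,
        eff, efg, egf, egg]
    have hdeg : ncDeg ((sgl u s' - sgl [] (X q * s')) * (1 : NCSPoly n)
        * ncStar (sgl u s' - sgl [] (X q * s'))) ≤ 2 * d := by
      rw [mul_one]
      refine le_trans (ncDeg_mul_le _ _) ?_
      have ha := le_trans (ncDeg_sub_le (sgl u s') (sgl [] (X q * s'))) (max_le hdf hdg)
      have hb := le_trans (ncDeg_ncStar_le (sgl u s' - sgl [] (X q * s'))) ha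
      omega
    have h0 := hdual (sgl u s' - sgl [] (X q * s')) 1 (Set.mem_insert _ _) hdeg
    rw [mul_one, hsig] at h0
    have hsub1 : sDeg (s' * s' * sigWordL (u ++ u.reverse)
        - (X q * s') * (X q * s')) ≤ 2 * d := by
      rw [sub_eq_add_neg]
      refine le_trans (sDeg_add_le _ _) (max_le hdA ?_)
      rwa [sDeg_neg]
    have hsub2 : sDeg ((X q * s') * (X q * s')
        - (X q * s') * (X q * s') : SPoly n) ≤ 2 * d := by
      rw [sub_eq_add_neg]
      refine le_trans (sDeg_add_le _ _) (max_le hdT ?_)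
      rwa [sDeg_neg]
    rwa [lext_sub L hsub1 hsub2, lext_sub L hdA hdT, lext_sub L hdT hdT] at h0
  rw [hA] at hplus hminus
  linarith

lemma key_step (N : ℝ) (m : ℕ) (t : Fin m → ℝ) (g : Fin m → NCSPoly n)
    (ht : ∀ i, 0 ≤ t i)
    (hg : ∀ i, (g i ∈ Cs ∧ IsFreePoly (g i) ∧ ncDeg (g i) ≤ 2) ∨
      (∃ p : NCSPoly n, IsFreePoly p ∧ ncDeg p ≤ 1 ∧ g i = p * ncStar p))
    (heq : ncConst N - ∑ j : Fin n, ncX j ^ 2 = ∑ i, ncConst (t i) * g i)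
    (s : SPoly n) (v' : List (Fin n)) (i0 : Fin n)
    (hdeg : sDeg s + v'.length + 1 ≤ d)
    (hzero : lext L (s * s * sigWordL (v' ++ v'.reverse)) = 0) :
    lext L (s * s * sigWordL ((v' ++ [i0]) ++ (v' ++ [i0]).reverse)) = 0 := by
  classical
  set A : SPoly n := s * s * sigWordL (v' ++ v'.reverse) with hAdef
  set P : Fin n → SPoly n :=
    fun j => s * s * sigWordL ((v' ++ [j]) ++ (v' ++ [j]).reverse) with hPdef
  set F : NCSPoly n := sgl v' s with hFdef
  have hPj : ∀ j : Fin n, sig (F * ncX j ^ 2 * ncStar F) = P j := by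
    intro j
    rw [hFdef, hPdef, pow_two, ncX_eq_sgl, sgl_mul, sgl_mul, ncStar_sgl, sgl_mul, sig_sgl]
    rw [show (v' ++ ([j] ++ [j])) ++ v'.reverse = (v' ++ [j]) ++ (v' ++ [j]).reverse by simp]
    ring
  have hPN : sig (F * ncConst N * ncStar F) = C N * A := by
    rw [hFdef, hAdef, ncConst_eq_sgl, sgl_mul, ncStar_sgl, sgl_mul, sig_sgl]
    rw [show (v' ++ ([] : List (Fin n))) ++ v'.reverse = v' ++ v'.reverse by simp]
    ring
  have hGi : ∀ i, sig (F * (ncConst (t i) * g i) * ncStar F)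
      = C (t i) * sig (F * g i * ncStar F) := by
    intro i
    rw [ncConst_mul, mul_smul_comm, smul_mul_assoc, sig_smul]
  have hncF : ncDeg F ≤ sDeg s + v'.length := by
    rw [hFdef]; exact ncDeg_sgl_le v' s
  have hgdeg : ∀ i, ncDeg (g i) ≤ 2 := by
    intro i
    rcases hg i with ⟨_, _, h2⟩ | ⟨p, _, hp1, hpe⟩
    · exact h2
    · rw [hpe]
      have h1 := ncDeg_mul_le p (ncStar p)
      have h2 := le_trans (ncDeg_ncStar_le p) hp1
      omega
  have hdG : ∀ i, sDeg (sig (F * g i * ncStar F)) ≤ 2 * d := by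
    intro i
    refine le_trans (sDeg_sig_le _) ?_
    have h1 := ncDeg_mul_le (F * g i) (ncStar F)
    have h2 := ncDeg_mul_le F (g i)
    have h3 := le_trans (ncDeg_ncStar_le F) hncF
    have h4 := hgdeg i
    omega
  have hdA : sDeg A ≤ 2 * d := by
    rw [hAdef]
    have := sDeg_ssl_le s s (v' ++ v'.reverse)
    have hl : (v' ++ v'.reverse).length = v'.length + v'.length := by
      rw [List.length_append, List.length_reverse]
    omega
  have hdP : ∀ j, sDeg (P j) ≤ 2 * d := by
    intro j
    simp only [hPdef]
    have := sDeg_ssl_le s s ((v' ++ [j]) ++ (v' ++ [j]).reverse)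
    have hl : ((v' ++ [j]) ++ (v' ++ [j]).reverse).length
        = (v'.length + 1) + (v'.length + 1) := by
      simp
      omega
    omega
  have hdCA : sDeg (C N * A) ≤ 2 * d := by
    rw [← MvPolynomial.smul_eq_C_mul]
    exact le_trans (sDeg_smul_le _ _) hdA
  have hEq : C N * A - ∑ j : Fin n, P j = ∑ i, C (t i) * sig (F * g i * ncStar F) := by
    have expand1 : F * (ncConst N - ∑ j : Fin n, ncX j ^ 2) * ncStar F
        = F * ncConst N * ncStar F - ∑ j : Fin n, F * ncX j ^ 2 * ncStar F := by
      rw [mul_sub, sub_mul, Finset.mul_sum, Finset.sum_mul]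
    have expand2 : F * (∑ i, ncConst (t i) * g i) * ncStar F
        = ∑ i, F * (ncConst (t i) * g i) * ncStar F := by
      rw [Finset.mul_sum, Finset.sum_mul]
    calc C N * A - ∑ j : Fin n, P j
        = sig (F * (ncConst N - ∑ j : Fin n, ncX j ^ 2) * ncStar F) := by
          rw [expand1, sig_sub, sig_sum, hPN]
          congr 1
          exact (Finset.sum_congr rfl fun j _ => hPj j).symm
      _ = ∑ i, C (t i) * sig (F * g i * ncStar F) := by
          rw [heq, expand2, sig_sum]
          exact Finset.sum_congr rfl fun i _ => hGi i
  have hlext : N * lext L A - ∑ j : Fin n, lext L (P j)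
      = ∑ i, t i * lext L (sig (F * g i * ncStar F)) := by
    have := congrArg (lext L) hEq
    rw [lext_sub L hdCA (sDeg_sum_le _ _ _ fun j _ => hdP j),
      lext_C_mul L N hdA, lext_sum L _ _ (fun j _ => hdP j),
      lext_sum L _ _ (fun i _ => le_trans
        (by rw [← MvPolynomial.smul_eq_C_mul]; exact sDeg_smul_le _ _) (hdG i))] at this
    rw [this]
    exact Finset.sum_congr rfl fun i _ => lext_C_mul L (t i) (hdG i)
  have hGnonneg : ∀ i, 0 ≤ lext L (sig (F * g i * ncStar F)) := by
    intro i
    rcases hg i with ⟨hC, _, hg2⟩ | ⟨p, _, hp1, hpe⟩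
    · refine hdual F (g i) (Set.mem_insert_of_mem _ hC) ?_
      have h1 := ncDeg_mul_le (F * g i) (ncStar F)
      have h2 := ncDeg_mul_le F (g i)
      have h3 := le_trans (ncDeg_ncStar_le F) hncF
      have h4 := hgdeg i
      omega
    · rw [hpe]
      have hre : F * (p * ncStar p) * ncStar F = (F * p) * 1 * ncStar (F * p) := by
        rw [ncStar_mul F p, mul_one, ← mul_assoc F p (ncStar p),
          mul_assoc (F * p) (ncStar p) (ncStar F)]
      rw [hre]
      refine hdual (F * p) 1 (Set.mem_insert _ _) ?_
      rw [mul_one]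
      have h1 := ncDeg_mul_le (F * p) (ncStar (F * p))
      have h2 := ncDeg_mul_le F p
      have h3 := ncDeg_ncStar_le (F * p)
      omega
  have hPnonneg : ∀ j : Fin n, 0 ≤ lext L (P j) := by
    intro j
    simp only [hPdef]
    refine lext_sq_nonneg L hdual s (v' ++ [j]) ?_
    have : (v' ++ [j]).length = v'.length + 1 := by simp
    omega
  have hrhs : 0 ≤ ∑ i, t i * lext L (sig (F * g i * ncStar F)) :=
    Finset.sum_nonneg fun i _ => mul_nonneg (ht i) (hGnonneg i)
  rw [hzero] at hlext
  have hsum0 : ∑ j : Fin n, lext L (P j) = 0 := by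
    have hle : ∑ j : Fin n, lext L (P j) ≤ 0 := by linarith
    exact le_antisymm hle (Finset.sum_nonneg fun j _ => hPnonneg j)
  have := (Finset.sum_eq_zero_iff_of_nonneg fun j _ => hPnonneg j).mp hsum0 i0
    (Finset.mem_univ i0)
  simp only [hPdef] at this
  exact this

end Aux3

section Aux4

open MvPolynomial

variable {n : ℕ}

lemma sDeg_monomial_le (mo : SW n →₀ ℕ) (c : ℝ) :
    sDeg (monomial mo c : SPoly n) ≤ monoWeight mo := by
  classical
  refine Finset.sup_le fun m hm => ?_
  rw [MvPolynomial.support_monomial] at hm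
  by_cases hc : c = 0
  · simp [hc] at hm
  · rw [if_neg hc, Finset.mem_singleton] at hm
    exact le_of_eq (congrArg monoWeight hm)

lemma one_le_swDeg (q : SW n) : 1 ≤ swDeg q := by
  rw [← swDeg_out q]
  exact List.length_pos_iff.mpr (Quotient.out q).2

end Aux4

/-- Lemma `l:L0`.
Let `C ⊆ 𝐒` be balanced and suppose `N − x₁² − ⋯ − xₙ²` is a conic combination of
elements of `C ∩ ℝ⟨x⟩_2` and hermitian squares of elements of `ℝ⟨x⟩_1` for some `N > 0`.
If `L ∈ (M(C)_d)^∨` and `L(1) = 0`, then `L = 0`. -/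
theorem statement_14 (n d : ℕ) (hn : 1 ≤ n) (C : Set (NCSPoly n))
    (hbal : Balanced C) (hsb : StrongBounded C)
    (L : SPolyLe n (2 * d) →ₗ[ℝ] ℝ) (hdual : InDualCone d C L)
    (h1 : lext L 1 = 0) :
    L = 0 := by
  classical
  obtain ⟨N, hN, m, t, g, ht, hg, heq⟩ := hsb
  open MvPolynomial in
  have key : ∀ k, k ≤ d → ∀ (S : Multiset (SW n)) (v : List (Fin n)),
      wsum S + v.length ≤ k →
      lext L (msPoly S * msPoly S * sigWordL (v ++ v.reverse)) = 0 := by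
    intro k
    induction k with
    | zero =>
      intro _ S v hSv
      have hS : S = 0 := by
        by_contra hS0
        obtain ⟨q, hq⟩ := Multiset.exists_mem_of_ne_zero hS0
        obtain ⟨T, rfl⟩ := Multiset.exists_cons_of_mem hq
        rw [wsum_cons] at hSv
        have := one_le_swDeg q
        omega
      have hv : v = [] := List.length_eq_zero_iff.mp (by omega)
      subst hS; subst hv
      simpa [msPoly_zero, sigWordL_nil] using h1
    | succ k ih =>
      intro hk S v hSv
      have hne : ∀ (S' : Multiset (SW n)) (v0 : List (Fin n)), v0 ≠ [] →
          wsum S' + v0.length ≤ k + 1 →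
          lext L (msPoly S' * msPoly S' * sigWordL (v0 ++ v0.reverse)) = 0 := by
        intro S' v0 hv0 hle
        rcases List.eq_nil_or_concat' v0 with rfl | ⟨v'', j, rfl⟩
        · exact absurd rfl hv0
        · have hlen : (v'' ++ [j]).length = v''.length + 1 := by simp
          refine key_step L hdual N m t g ht hg heq (msPoly S') v'' j ?_ ?_
          · have := sDeg_msPoly_le S'
            omega
          · exact ih (by omega) S' v'' (by omega)
      rcases List.eq_nil_or_concat' v with hv | ⟨v'', j, rfl⟩
      · subst hv
        rcases Multiset.empty_or_exists_mem S with rfl | ⟨q, hq⟩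
        · simpa [msPoly_zero, sigWordL_nil] using h1
        · obtain ⟨S', rfl⟩ := Multiset.exists_cons_of_mem hq
          rw [wsum_cons, List.length_nil, add_zero] at hSv
          have hul : (Quotient.out q).1.length = swDeg q := swDeg_out q
          have hA := hne S' (Quotient.out q).1 (Quotient.out q).2 (by omega)
          have hempty := lext_sq_empty L hdual q (msPoly S')
            (by have := sDeg_msPoly_le S'; omega) hA
          have hgoal : msPoly (q ::ₘ S') * msPoly (q ::ₘ S')
              * sigWordL (([] : List (Fin n)) ++ List.reverse [])
              = (X q * msPoly S') * (X q * msPoly S') := by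
            rw [msPoly_cons]
            simp [sigWordL_nil]
          rw [hgoal]
          exact hempty
      · exact hne S (v'' ++ [j]) (by simp) hSv
  have hmono : ∀ mo : SW n →₀ ℕ, monoWeight mo ≤ 2 * d →
      lext L (MvPolynomial.monomial mo (1 : ℝ)) = 0 := by
    intro mo hmo
    obtain ⟨hrep, hwt⟩ := monomial_eq_msPoly mo
    rw [hrep]
    have hS : wsum mo.toMultiset ≤ 2 * d := by omega
    obtain ⟨S1, S2, hcase⟩ := split d mo.toMultiset hS
    rcases hcase with ⟨hsum, hw1, hw2⟩ | ⟨q, c, hsum, hcq, hw1, hw2⟩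
    · have hrepr : msPoly mo.toMultiset = msPoly S1 * msPoly S2
          * sigWordL (([] : List (Fin n)) ++ List.reverse []) := by
        rw [hsum, msPoly_add]
        simp [sigWordL_nil]
      rw [hrepr]
      have hd1 := sDeg_msPoly_le S1
      have hd2 := sDeg_msPoly_le S2
      refine lext_cross_eq_zero L hdual (msPoly S1) (msPoly S2) [] []
        (by simp; omega) (by simp; omega) ?_ ?_
      · exact key d le_rfl S1 [] (by simp; omega)
      · exact key d le_rfl S2 [] (by simp; omega)
    · have hul : (Quotient.out q).1.length = swDeg q := swDeg_out q
      set u : List (Fin n) := (Quotient.out q).1 with hu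
      have hvlen : (u.take c).length = c := by
        rw [List.length_take]
        omega
      have hv2len : ((u.drop c).reverse).length = swDeg q - c := by
        rw [List.length_reverse, List.length_drop]
        omega
      have hvv2 : u.take c ++ ((u.drop c).reverse).reverse = u := by
        rw [List.reverse_reverse]
        exact List.take_append_drop c u
      have hrepr : msPoly mo.toMultiset = msPoly S1 * msPoly S2
          * sigWordL (u.take c ++ ((u.drop c).reverse).reverse) := by
        rw [hvv2, hsum, msPoly_cons, msPoly_add, hu, sigWordL_out q]
        ring
      rw [hrepr]
      have hd1 := sDeg_msPoly_le S1
      have hd2 := sDeg_msPoly_le S2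
      refine lext_cross_eq_zero L hdual (msPoly S1) (msPoly S2) (u.take c)
        ((u.drop c).reverse) (by omega) (by omega) ?_ ?_
      · exact key d le_rfl S1 (u.take c) (by omega)
      · exact key d le_rfl S2 ((u.drop c).reverse) (by omega)
  apply LinearMap.ext
  rintro ⟨p, hp⟩
  rw [LinearMap.zero_apply, ← lext_apply L hp]
  have hrep : p = ∑ mo ∈ p.support, MvPolynomial.monomial mo (MvPolynomial.coeff mo p) :=
    (MvPolynomial.support_sum_monomial_coeff p).symm
  have hbound : ∀ mo ∈ p.support,
      sDeg (MvPolynomial.monomial mo (MvPolynomial.coeff mo p) : SPoly n) ≤ 2 * d :=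
    fun mo hmo => le_trans (sDeg_monomial_le mo _) (le_trans (le_sDeg hmo) hp)
  rw [hrep, lext_sum L _ _ hbound]
  refine Finset.sum_eq_zero fun mo hmo => ?_
  have hw : monoWeight mo ≤ 2 * d := le_trans (le_sDeg hmo) hp
  have hsm : (MvPolynomial.monomial mo (MvPolynomial.coeff mo p) : SPoly n)
      = MvPolynomial.coeff mo p • MvPolynomial.monomial mo (1 : ℝ) := by
    rw [MvPolynomial.smul_monomial, smul_eq_mul, mul_one]
  rw [hsm, lext_smul L _ (le_trans (sDeg_monomial_le mo 1) hw), hmono mo hw, mul_zero]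


end StatePoly
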